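/- Let K be a field of characteristic p > 0, q a power of p, and α_1,...,α_d, β_1,...,β_d ∈ K with the α_i nonzero. Define a(n) = Σ_{i=1}^d β_i α_i^n. If a(q^n) = 0 for all sufficiently large n ∈ ℕ, then a(q^n) = 0 for all n ∈ ℕ. -/

import Mathlib

namespace ZeroAtQPow

variable (K : Type) [Field K] (p : ℕ) [Fact p.Prime] [CharP K p]

/-- The subfield of elements fixed by `x ↦ x ^ p ^ e`. -/
def Fq (e : ℕ) : Subfield K where
  carrier := {x | iterateFrobenius K p e x = x}
  mul_mem' := fun {a b} ha hb => by
    simp only [Set.mem_setOf_eq, map_mul] at *; rw [ha, hb]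
  one_mem' := by simp
  add_mem' := fun {a b} ha hb => by
    simp only [Set.mem_setOf_eq, map_add] at *; rw [ha, hb]
  zero_mem' := by simp
  neg_mem' := fun {a} ha => by
    simp only [Set.mem_setOf_eq, map_neg] at *; rw [ha]
  inv_mem' := fun a ha => by
    simp only [Set.mem_setOf_eq, map_inv₀] at *; rw [ha]

lemma mem_Fq_iff (e : ℕ) (x : K) : x ∈ Fq K p e ↔ x ^ p ^ e = x := by
  show iterateFrobenius K p e x = x ↔ _
  rw [iterateFrobenius_def]

lemma fixed_pow (e q : ℕ) (hq : q = p ^ e) {c : K} (hc : c ∈ Fq K p e) (n : ℕ) :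
    c ^ q ^ n = c := by
  induction n with
  | zero => simp
  | succ n ih =>
    rw [pow_succ, pow_mul, ih, hq]
    exact (mem_Fq_iff K p e c).mp hc

lemma sum_pow_q (e q : ℕ) (hq : q = p ^ e) {m : ℕ} (s : Fin m → K) :
    (∑ i, s i) ^ q = ∑ i, (s i) ^ q := by
  have h := map_sum (iterateFrobenius K p e) s Finset.univ
  simpa only [iterateFrobenius_def, ← hq] using h

/-- `x ↦ x ^ q ^ N` as an `Fq`-linear map. -/
def psiL (e q : ℕ) (hq : q = p ^ e) (N : ℕ) : K →ₗ[Fq K p e] K where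
  toFun x := x ^ q ^ N
  map_add' x y := by
    show (x + y) ^ q ^ N = x ^ q ^ N + y ^ q ^ N
    have hpe : q ^ N = p ^ (e * N) := by rw [hq, ← pow_mul]
    rw [hpe, ← iterateFrobenius_def, ← iterateFrobenius_def, ← iterateFrobenius_def, map_add]
  map_smul' c x := by
    show ((c : K) * x) ^ q ^ N = (c : K) * x ^ q ^ N
    rw [mul_pow, fixed_pow K p e q hq c.2]

lemma psiL_inj (e q : ℕ) (hq : q = p ^ e) (N : ℕ) :
    Function.Injective (psiL K p e q hq N) := by
  intro x y h
  have hpe : q ^ N = p ^ (e * N) := by rw [hq, ← pow_mul]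
  have h' : iterateFrobenius K p (e * N) x = iterateFrobenius K p (e * N) y := by
    have : x ^ q ^ N = y ^ q ^ N := h
    rw [hpe] at this
    simpa only [iterateFrobenius_def] using this
  exact (iterateFrobenius K p (e * N)).injective h'

lemma li_pow_q (e q : ℕ) (hq : q = p ^ e) {m N : ℕ} {γ : Fin m → K}
    (h : LinearIndependent (Fq K p e) γ) :
    LinearIndependent (Fq K p e) (fun i => γ i ^ q ^ N) :=
  h.map' (psiL K p e q hq N) (LinearMap.ker_eq_bot.mpr (psiL_inj K p e q hq N))

lemma key (e q : ℕ) (hq : q = p ^ e) (N : ℕ) : ∀ (m : ℕ) (γ b : Fin m → K),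
    LinearIndependent (Fq K p e) γ →
    (∀ n ≥ N, ∑ i, b i * γ i ^ q ^ n = 0) → ∀ i, b i = 0 := by
  have hq0 : q ≠ 0 := by
    rw [hq]; exact (pow_pos (Fact.out : p.Prime).pos e).ne'
  intro m
  induction m with
  | zero => intro γ b _ _ i; exact i.elim0
  | succ m IH =>
    intro γ b hind hrel
    by_cases hb : b (Fin.last m) = 0
    · have hrel' : ∀ n ≥ N, ∑ i : Fin m, b i.castSucc * γ i.castSucc ^ q ^ n = 0 := by
        intro n hn
        have h := hrel n hn
        rwa [Fin.sum_univ_castSucc, hb, zero_mul, add_zero] at h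
      have h0 := IH (γ ∘ Fin.castSucc) (b ∘ Fin.castSucc)
        (hind.comp Fin.castSucc (Fin.castSucc_injective m)) hrel'
      intro i
      exact Fin.lastCases hb (fun j => h0 j) i
    · exfalso
      set F := Fq K p e with hF
      set b' : Fin (m+1) → K := fun i => b i / b (Fin.last m) with hb'
      have hb'last : b' (Fin.last m) = 1 := div_self hb
      have hrel' : ∀ n ≥ N, ∑ i, b' i * γ i ^ q ^ n = 0 := by
        intro n hn
        simp only [hb', div_mul_eq_mul_div, ← Finset.sum_div, hrel n hn, zero_div]
      have hpow : ∀ (x : K) (n : ℕ), (x ^ q ^ n) ^ q = x ^ q ^ (n+1) := by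
        intro x n; rw [← pow_mul, ← pow_succ]
      have hsumq : ∀ n ≥ N, ∑ i, (b' i) ^ q * γ i ^ q ^ (n+1) = 0 := by
        intro n hn
        have h1 : ∑ i, (b' i) ^ q * γ i ^ q ^ (n+1)
            = (∑ i, b' i * γ i ^ q ^ n) ^ q := by
          rw [sum_pow_q K p e q hq]
          simp only [mul_pow, hpow]
        rw [h1, hrel' n hn, zero_pow hq0]
      -- relation for the reduced family
      have hc : ∀ n ≥ N,
          ∑ i : Fin m, ((b' i.castSucc) ^ q - b' i.castSucc) * (γ i.castSucc ^ q) ^ q ^ n = 0 := by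
        intro n hn
        have hfull : ∑ i : Fin (m+1), ((b' i) ^ q - b' i) * γ i ^ q ^ (n+1) = 0 := by
          simp only [sub_mul, Finset.sum_sub_distrib, hsumq n hn,
            hrel' (n+1) (le_trans hn (Nat.le_succ n)), sub_zero]
        rw [Fin.sum_univ_castSucc, hb'last, one_pow, sub_self, zero_mul, add_zero] at hfull
        calc ∑ i : Fin m, ((b' i.castSucc) ^ q - b' i.castSucc) * (γ i.castSucc ^ q) ^ q ^ n
            = ∑ i : Fin m, ((b' i.castSucc) ^ q - b' i.castSucc) * γ i.castSucc ^ q ^ (n+1) := by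
              apply Finset.sum_congr rfl; intro i _
              rw [← hpow, ← pow_mul, ← pow_mul, mul_comm q (q ^ n)]
          _ = 0 := hfull
      have hγq : LinearIndependent F (fun i : Fin m => γ i.castSucc ^ q) := by
        have h1 := li_pow_q K p e q hq (N := 1)
          (hind.comp Fin.castSucc (Fin.castSucc_injective m))
        simpa only [Function.comp, pow_one] using h1
      have hcz := IH (fun i => γ i.castSucc ^ q)
        (fun i => (b' i.castSucc) ^ q - b' i.castSucc) hγq hc
      have hmem : ∀ i, b' i ∈ F := by
        intro i
        refine Fin.lastCases ?_ (fun j => ?_) i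
        · rw [hb'last]; exact one_mem F
        · rw [mem_Fq_iff, ← hq]
          exact sub_eq_zero.mp (hcz j)
      -- contradiction from the relation at N with coefficients in F
      have hγN : LinearIndependent F (fun i : Fin (m+1) => γ i ^ q ^ N) :=
        li_pow_q K p e q hq hind
      have hsum0 : ∑ i, (⟨b' i, hmem i⟩ : F) • (γ i ^ q ^ N) = 0 := by
        have := hrel' N le_rfl
        simpa only [Subfield.smul_def, smul_eq_mul] using this
      have hlast := (Fintype.linearIndependent_iff.mp hγN
        (fun i => ⟨b' i, hmem i⟩) hsum0) (Fin.last m)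
      rw [Subtype.ext_iff] at hlast
      simp only [hb'last] at hlast
      exact one_ne_zero hlast

end ZeroAtQPow

open ZeroAtQPow in
/-- Let `K` have characteristic `p > 0` and `q = p^e`. If `a(n) = Σ_i β_i α_i^n` with all
`α_i ≠ 0` satisfies `a(q^n) = 0` for all sufficiently large `n`, then `a(q^n) = 0` for
all `n ∈ ℕ`. -/
theorem zero_at_q_powers_of_eventually
    (K : Type) [Field K] (p : ℕ) [Fact p.Prime] [CharP K p]
    (e : ℕ) (he : 0 < e) (q : ℕ) (hq : q = p ^ e)
    (d : ℕ) (α β : Fin d → K) (hα : ∀ i, α i ≠ 0)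
    (hev : ∃ N : ℕ, ∀ n ≥ N, ∑ i : Fin d, β i * α i ^ q ^ n = 0) :
    ∀ n : ℕ, ∑ i : Fin d, β i * α i ^ q ^ n = 0 := by
  obtain ⟨N, hN⟩ := hev
  set F := Fq K p e with hF
  set V := Submodule.span F (Set.range α) with hV
  haveI : FiniteDimensional F V := FiniteDimensional.span_of_finite F (Set.finite_range α)
  haveI : Module.Free F V := Module.Free.of_divisionRing _ _
  set m := Module.finrank F V with hm
  set bV := Module.finBasis F V with hbV
  set γ : Fin m → K := fun j => (bV j : K) with hγdef
  have hγ : LinearIndependent F γ := by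
    have h := bV.linearIndependent.map' V.subtype V.ker_subtype
    exact h
  have hmemV : ∀ i, α i ∈ V := fun i => Submodule.subset_span ⟨i, rfl⟩
  set c : Fin d → Fin m → F := fun i j => bV.repr ⟨α i, hmemV i⟩ j with hc
  have hrepr : ∀ i, α i = ∑ j, (c i j : K) * γ j := by
    intro i
    have h := bV.sum_repr ⟨α i, hmemV i⟩
    have h2 := congrArg (V.subtype) h
    simpa only [map_sum, Submodule.coe_subtype, SetLike.val_smul, Subfield.smul_def, smul_eq_mul] using h2.symm
  -- expand α i ^ q ^ n using the Frobenius ring hom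
  have hexp : ∀ (i : Fin d) (n : ℕ), α i ^ q ^ n = ∑ j, (c i j : K) * γ j ^ q ^ n := by
    intro i n
    have hpe : q ^ n = p ^ (e * n) := by rw [hq, ← pow_mul]
    rw [hrepr i, hpe, ← iterateFrobenius_def, map_sum]
    apply Finset.sum_congr rfl
    intro j _
    rw [map_mul, iterateFrobenius_def, iterateFrobenius_def, ← hpe,
      fixed_pow K p e q hq (c i j).2]
  have hswap : ∀ n, ∑ i, β i * α i ^ q ^ n
      = ∑ j, (∑ i, β i * (c i j : K)) * γ j ^ q ^ n := by
    intro n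
    simp only [hexp, Finset.mul_sum, Finset.sum_mul]
    rw [Finset.sum_comm]
    apply Finset.sum_congr rfl; intro j _
    apply Finset.sum_congr rfl; intro i _
    ring
  have hB := key K p e q hq N m γ (fun j => ∑ i, β i * (c i j : K)) hγ
    (fun n hn => by rw [← hswap n]; exact hN n hn)
  intro n
  rw [hswap n]
  simp only [hB, zero_mul, Finset.sum_const_zero]
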